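/- For every positive integer N, the number of subgroups H of (ℤ/Nℤ) × (ℤ/Nℤ) such that H is cyclic of order N equals κ(N) := N · ∏_{p prime, p ∣ N} (1 + 1/p). (Equivalently, the cardinality of the set of cyclic subgroups of cardinality N of (ZMod N × ZMod N), cast to ℚ, equals (N : ℚ) · ∏_{p ∈ N.primeFactors} (1 + 1/p).) -/

import Mathlib

open AddSubgroup Finset ArithmeticFunction
open scoped ArithmeticFunction.Moebius

variable {N : ℕ} [NeZero N]

lemma zmul_cyclic {G : Type*} [AddGroup G] (x : G) : IsAddCyclic (zmultiples x) := by
  refine ⟨⟨x, mem_zmultiples x⟩, fun y => ?_⟩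
  obtain ⟨n, hn⟩ := y.2
  exact ⟨n, Subtype.ext (by simpa using hn)⟩

lemma partA :
    (univ.filter fun x : ZMod N × ZMod N => addOrderOf x = N).card
      = Nat.card {H : AddSubgroup (ZMod N × ZMod N) // IsAddCyclic H ∧ Nat.card H = N}
        * N.totient := by
  classical
  set G := ZMod N × ZMod N
  haveI : Fintype (AddSubgroup G) := Fintype.ofFinite _
  set t : Finset (AddSubgroup G) :=
    univ.filter (fun H => IsAddCyclic H ∧ Nat.card H = N) with ht
  have hcard : Nat.card {H : AddSubgroup G // IsAddCyclic H ∧ Nat.card H = N} = t.card := by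
    rw [Nat.card_eq_fintype_card, Fintype.card_subtype]
  rw [hcard]
  rw [Finset.card_eq_sum_card_fiberwise
    (f := fun x : G => zmultiples x) (t := t) ?mem]
  case mem =>
    intro x hx
    simp only [ht, Finset.mem_coe, mem_filter, mem_univ, true_and] at hx ⊢
    exact ⟨zmul_cyclic x, by rw [Nat.card_zmultiples, hx]⟩
  have hfib : ∀ H ∈ t, (filter (fun x : G => zmultiples x = H) (filter (fun x : G => addOrderOf x = N) univ)).card = N.totient := ?_
  · rw [Finset.sum_congr rfl hfib, Finset.sum_const, smul_eq_mul]
  intro H hH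
  rw [ht] at hH
  simp only [mem_filter, mem_univ, true_and] at hH
  obtain ⟨hcyc, hcardH⟩ := hH
  haveI : IsAddCyclic H := hcyc
  haveI : Fintype H := Fintype.ofFinite _
  have hFH : Fintype.card H = N := by rw [← Nat.card_eq_fintype_card, hcardH]
  have key : ({h : H | addOrderOf h = N} : Finset H).card = N.totient :=
    IsAddCyclic.card_addOrderOf_eq_totient (d := N) (by rw [hFH])
  rw [← key]
  apply Finset.card_bij (fun x hx => (⟨x, by
      simp only [mem_filter, mem_univ, true_and] at hx
      exact hx.2 ▸ mem_zmultiples x⟩ : H))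
  · intro x hx
    simp only [mem_filter, mem_univ, true_and] at hx ⊢
    exact (AddSubgroup.addOrderOf_mk x _).trans hx.1
  · intro a ha b hb hab
    simpa [Subtype.ext_iff] using hab
  · intro h hh
    rw [mem_filter] at hh
    replace hh := hh.2
    have horder : addOrderOf (h : G) = N := by rw [AddSubgroup.addOrderOf_coe]; exact hh
    have hmem : zmultiples (h : G) = H := by
      apply AddSubgroup.eq_of_le_of_card_ge
      · rw [zmultiples_le]; exact h.2
      · rw [Nat.card_zmultiples, horder, hcardH]
    exact ⟨(h : G), by simp [mem_filter, horder, hmem], Subtype.ext rfl⟩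

lemma zmod_torsion (n : ℕ) (hn : 0 < n) (hdvd : n ∣ N) :
    (univ.filter fun a : ZMod N => n • a = 0).card = n := by
  classical
  rw [← sum_card_addOrderOf_eq_card_nsmul_eq_zero hn.ne']
  conv_rhs => rw [← Nat.sum_totient n]
  refine Finset.sum_congr rfl fun m hm => ?_
  have hmN : m ∣ Fintype.card (ZMod N) := by
    rw [ZMod.card]
    exact (Nat.mem_divisors.mp hm).1.trans hdvd
  exact IsAddCyclic.card_addOrderOf_eq_totient hmN

lemma prod_torsion (n : ℕ) (hn : 0 < n) (hdvd : n ∣ N) :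
    (univ.filter fun x : ZMod N × ZMod N => n • x = 0).card = n ^ 2 := by
  classical
  have : (univ.filter fun x : ZMod N × ZMod N => n • x = 0)
      = (univ.filter fun a : ZMod N => n • a = 0) ×ˢ
        (univ.filter fun a : ZMod N => n • a = 0) := by
    ext ⟨a, b⟩
    simp [Prod.ext_iff]
  rw [this, Finset.card_product, zmod_torsion n hn hdvd, sq]

lemma sum_orders (n : ℕ) (hn : 0 < n) (hdvd : n ∣ N) :
    ∑ m ∈ n.divisors, (univ.filter fun x : ZMod N × ZMod N => addOrderOf x = m).card
      = n ^ 2 := by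
  classical
  rw [
    sum_card_addOrderOf_eq_card_nsmul_eq_zero hn.ne', prod_torsion n hn hdvd]

lemma moebius_step (hN : 0 < N) :
    ((univ.filter fun x : ZMod N × ZMod N => addOrderOf x = N).card : ℚ)
      = ∑ x ∈ N.divisorsAntidiagonal, (μ x.fst : ℚ) * (x.snd : ℚ) ^ 2 := by
  classical
  have := (sum_eq_iff_sum_mul_moebius_eq_on (R := ℚ)
    (f := fun m => ((univ.filter fun x : ZMod N × ZMod N => addOrderOf x = m).card : ℚ))
    (g := fun n => (n : ℚ) ^ 2) {n | n ∣ N} (fun m n hmn hn => hmn.trans hn)).mp ?_ N hN dvd_rfl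
  · exact this.symm
  · intro n hn hdvd
    rw [← Nat.cast_sum, sum_orders n hn hdvd]
    push_cast
    ring

noncomputable def Fq : ArithmeticFunction ℚ :=
  ((μ : ArithmeticFunction ℤ) : ArithmeticFunction ℚ)
    * ((pow 2 : ArithmeticFunction ℕ) : ArithmeticFunction ℚ)

lemma Fq_apply {n : ℕ} (_hn : n ≠ 0) :
    Fq n = ∑ x ∈ n.divisorsAntidiagonal, (μ x.fst : ℚ) * (x.snd : ℚ) ^ 2 := by
  rw [Fq, mul_apply]
  refine Finset.sum_congr rfl fun x hx => ?_
  have hx2 : x.2 ≠ 0 := by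
    rcases Nat.mem_divisorsAntidiagonal.mp hx with ⟨h1, h2⟩
    intro h0; exact h2 (by rw [← h1, h0, mul_zero])
  rw [intCoe_apply, natCoe_apply, pow_apply, if_neg (by simp [hx2])]
  push_cast
  ring

lemma Fq_mult : Fq.IsMultiplicative :=
  (isMultiplicative_moebius.intCast).mul (isMultiplicative_pow.natCast)

lemma Fq_prime_pow {p k : ℕ} (hp : p.Prime) (hk : k ≠ 0) :
    Fq (p ^ k) = ((p : ℚ) ^ k) ^ 2 * (1 - ((p : ℚ) ^ 2)⁻¹) := by
  have hp0 : (p : ℚ) ≠ 0 := Nat.cast_ne_zero.mpr hp.pos.ne'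
  rw [Fq_apply (pow_ne_zero k hp.pos.ne'), Nat.sum_divisorsAntidiagonal
    (f := fun d e => (μ d : ℚ) * (e : ℚ) ^ 2), Nat.sum_divisors_prime_pow hp]
  obtain ⟨k', rfl⟩ := Nat.exists_eq_succ_of_ne_zero hk
  rw [Finset.sum_range_succ', Finset.sum_range_succ']
  have hzero : ∀ i ∈ Finset.range k', (μ (p ^ (i + 1 + 1)) : ℚ)
      * ((p ^ (k' + 1) / p ^ (i + 1 + 1) : ℕ) : ℚ) ^ 2 = 0 := by
    intro i _
    rw [moebius_apply_prime_pow hp (by omega), if_neg (by omega)]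
    simp
  rw [Finset.sum_congr rfl hzero, Finset.sum_const_zero, zero_add]
  rw [pow_zero, pow_one, moebius_apply_one, moebius_apply_prime hp]
  rw [Nat.div_one, show p ^ k'.succ / p = p ^ k' by
    rw [pow_succ, Nat.mul_div_cancel _ hp.pos]]
  push_cast
  have : (p:ℚ) ^ 2 ≠ 0 := pow_ne_zero 2 hp0
  field_simp
  simp only [Nat.succ_eq_add_one]
  ring

omit [NeZero N] in
lemma Fq_eval (hN : 0 < N) :
    Fq N = (N : ℚ) ^ 2 * ∏ p ∈ N.primeFactors, (1 - ((p : ℚ) ^ 2)⁻¹) := by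
  rw [Fq_mult.multiplicative_factorization Fq hN.ne']
  rw [Finsupp.prod, Nat.support_factorization]
  have hterm : ∀ p ∈ N.primeFactors,
      Fq (p ^ N.factorization p)
        = ((p : ℚ) ^ N.factorization p) ^ 2 * (1 - ((p : ℚ) ^ 2)⁻¹) := by
    intro p hp
    have hpp := Nat.prime_of_mem_primeFactors hp
    exact Fq_prime_pow hpp
      (hpp.factorization_pos_of_dvd hN.ne' (Nat.dvd_of_mem_primeFactors hp)).ne'
  rw [Finset.prod_congr rfl hterm, Finset.prod_mul_distrib]
  congr 1
  rw [Finset.prod_pow]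
  have hN' : ∏ p ∈ N.primeFactors, p ^ N.factorization p = N := by
    conv_rhs => rw [← Nat.factorization_prod_pow_eq_self hN.ne']
    rw [Finsupp.prod, Nat.support_factorization]
  rw [show ((N:ℚ)) = ((∏ p ∈ N.primeFactors, p ^ N.factorization p : ℕ) : ℚ) by rw [hN']]
  push_cast
  rfl

/-- For every positive integer `N`, the number of cyclic subgroups of order `N` of
`(ℤ/Nℤ) × (ℤ/Nℤ)`, cast to `ℚ`, equals `N · ∏_{p ∣ N prime} (1 + 1/p)`. -/
theorem card_cyclic_subgroups_of_order_eq_kappa (N : ℕ) (hN : 0 < N) :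
    (Nat.card {H : AddSubgroup (ZMod N × ZMod N) // IsAddCyclic H ∧ Nat.card H = N} : ℚ)
      = (N : ℚ) * ∏ p ∈ N.primeFactors, (1 + 1 / (p : ℚ)) := by
  classical
  haveI : NeZero N := ⟨hN.ne'⟩
  have hT : ((univ.filter fun x : ZMod N × ZMod N => addOrderOf x = N).card : ℚ)
      = (N : ℚ) ^ 2 * ∏ p ∈ N.primeFactors, (1 - ((p : ℚ) ^ 2)⁻¹) := by
    rw [moebius_step hN, ← Fq_apply hN.ne', Fq_eval hN]
  rw [partA] at hT
  push_cast at hT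
  have hphi : ((N.totient : ℚ)) ≠ 0 :=
    Nat.cast_ne_zero.mpr (Nat.totient_pos.mpr hN).ne'
  apply mul_right_cancel₀ hphi
  rw [hT, Nat.totient_eq_mul_prod_factors]
  have hsplit : ∀ p ∈ N.primeFactors,
      (1 - ((p : ℚ) ^ 2)⁻¹) = (1 + 1 / (p : ℚ)) * (1 - (p : ℚ)⁻¹) := by
    intro p hp
    have hp0 : (p : ℚ) ≠ 0 :=
      Nat.cast_ne_zero.mpr (Nat.prime_of_mem_primeFactors hp).pos.ne'
    field_simp
    ring
  rw [Finset.prod_congr rfl hsplit, Finset.prod_mul_distrib]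
  ring
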